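/- Let ε be a monochromatic symmetrized Fitch map with M = {m} and |X| ≥ 3, and suppose its graph G_m(ε) is complete multi-partite with at least two maximal independent sets of size ≥ 2 (collection I_2). Then any edge-labeled tree (T, λ) on X satisfying: |inner vertices of T| = |I_2|; each I ∈ I_2 has a dedicated inner vertex v_I adjacent to all leaves of I; outer edges to leaves in ⋃I_2 labeled ∅; outer edges to all other leaves labeled {m}; and all inner edges labeled {m}; explains ε. -/

import Mathlib

open SimpleGraph

/-- A phylogenetic (unrooted) tree with leaf set `X`: a finite connected acyclic
simple graph in which the leaves of `X` are injectively embedded as vertices of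
degree at most one, and all other (inner) vertices have degree at least three. -/
structure PhyloTree (X : Type) where
  V : Type
  [finV : Fintype V]
  T : SimpleGraph V
  conn : T.Connected
  acyc : T.IsAcyclic
  leaf : X → V
  leaf_inj : Function.Injective leaf
  leaf_deg : ∀ x : X, (T.neighborSet (leaf x)).ncard ≤ 1
  inner_deg : ∀ v : V, v ∉ Set.range leaf → 3 ≤ (T.neighborSet v).ncard

/-- `(t, lab)` explains `ε`: for distinct leaves `x,y`, a color `m` belongs to
`ε x y` iff the (unique) path from `x` to `y` in `t` contains an `m`-edge. -/
def Explains {X M : Type} (t : PhyloTree X) (lab : Sym2 t.V → Set M)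
    (ε : X → X → Set M) : Prop :=
  ∀ x y : X, x ≠ y → ∀ p : t.T.Walk (t.leaf x) (t.leaf y), p.IsPath →
    ∀ m : M, m ∈ ε x y ↔ ∃ e ∈ p.edges, m ∈ lab e

/-- `ε` is a symmetrized Fitch map: some edge-labeled tree explains it. -/
def IsSymFitch {X M : Type} (ε : X → X → Set M) : Prop :=
  ∃ t : PhyloTree X, ∃ lab : Sym2 t.V → Set M, Explains t lab ε

/-- The tree `t` displays the subsplit `A|B`: some edge of `t` separates the
leaves in `A` from the leaves in `B`. -/
def Displays {X : Type} (t : PhyloTree X) (A B : Set X) : Prop :=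
  ∃ u v : t.V, t.T.Adj u v ∧
    (∀ x ∈ A, (t.T.deleteEdges {s(u,v)}).Reachable (t.leaf x) u) ∧
    (∀ x ∈ B, (t.T.deleteEdges {s(u,v)}).Reachable (t.leaf x) v)

/-- The complementary neighborhood `N_m[y]` of `y` w.r.t. color `m`. -/
def Nbr {X M : Type} (ε : X → X → Set M) (m : M) (y : X) : Set X :=
  {x | x = y ∨ m ∉ ε x y}

/-- Construction of explaining trees for monochromatic symmetrized Fitch maps:
let `ε` be monochromatic and symmetric with `G_m(ε)` complete multi-partite
(non-`m`-adjacency is transitive) with at least two maximal independent sets of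
size `≥ 2` (the collection `I₂`, given by the complementary neighborhoods of
size `≥ 2`). Then any edge-labeled tree `(t, lab)` on `X` with: exactly `|I₂|`
inner vertices; a dedicated inner vertex `v_I` for each `I ∈ I₂` adjacent to
all leaves of `I`; outer edges at leaves of `⋃ I₂` labeled `∅`; all other outer
edges labeled `{m}`; and all inner edges labeled `{m}`; explains `ε`. -/
theorem construction_explains_mono_fitch {X M : Type} [Fintype X]
    (hcard : 3 ≤ Fintype.card X) (m : M)
    (ε : X → X → Set M) (hsym : ∀ x y : X, ε x y = ε y x)
    (hmono : ∀ x y : X, ε x y ⊆ {m})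
    (hmp : ∀ a b c : X, a ≠ b → a ≠ c → b ≠ c →
      m ∉ ε a b → m ∉ ε b c → m ∉ ε a c)
    (I2 : Set (Set X))
    (hI2 : I2 = {N : Set X | (∃ y : X, N = Nbr ε m y) ∧ 2 ≤ N.ncard})
    (hI2card : 2 ≤ I2.ncard)
    (t : PhyloTree X) (lab : Sym2 t.V → Set M)
    (hinner : ({v : t.V | v ∉ Set.range t.leaf}).ncard = I2.ncard)
    (vtx : Set X → t.V)
    (hvtx_inner : ∀ N ∈ I2, vtx N ∉ Set.range t.leaf)
    (hvtx_inj : Set.InjOn vtx I2)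
    (hvtx_adj : ∀ N ∈ I2, ∀ x ∈ N, t.T.Adj (t.leaf x) (vtx N))
    (hout_empty : ∀ x : X, (∃ N ∈ I2, x ∈ N) →
      ∀ w : t.V, t.T.Adj (t.leaf x) w → lab s(t.leaf x, w) = ∅)
    (hout_m : ∀ x : X, (¬ ∃ N ∈ I2, x ∈ N) →
      ∀ w : t.V, t.T.Adj (t.leaf x) w → lab s(t.leaf x, w) = {m})
    (hinner_m : ∀ u w : t.V, t.T.Adj u w → u ∉ Set.range t.leaf →
      w ∉ Set.range t.leaf → lab s(u, w) = {m}) :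
    Explains t lab ε := by
  classical
  haveI := t.finV
  -- every leaf has a unique neighbour
  have uniq : ∀ (z : X) (w w' : t.V), t.T.Adj (t.leaf z) w → t.T.Adj (t.leaf z) w' → w = w' := by
    intro z w w' hw hw'
    exact (Set.ncard_le_one (Set.toFinite _)).mp (t.leaf_deg z) w hw w' hw'
  -- two members of a class are non-adjacent in G_m
  have hcommon : ∀ N ∈ I2, ∀ x ∈ N, ∀ y ∈ N, x ≠ y → m ∉ ε x y := by
    intro N hN x hx y hy hxy
    rw [hI2] at hN
    obtain ⟨⟨z, rfl⟩, -⟩ := hN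
    simp only [Nbr, Set.mem_setOf_eq] at hx hy
    rcases hx with rfl | hx
    · rcases hy with rfl | hy
      · exact absurd rfl hxy
      · rw [hsym]; exact hy
    · rcases hy with rfl | hy
      · exact hx
      · rcases eq_or_ne x y with rfl | -
        · exact absurd rfl hxy
        rcases eq_or_ne x z with rfl | hxz
        · rw [hsym]; exact hy
        rcases eq_or_ne y z with rfl | hyz
        · exact hx
        exact hmp x z y hxz hxy (Ne.symm hyz) hx (by rw [hsym]; exact hy)
  -- non-adjacent vertices share a class
  have hNbr_mem : ∀ x y : X, x ≠ y → m ∉ ε x y → ∃ N ∈ I2, x ∈ N ∧ y ∈ N := by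
    intro x y hxy h
    have hxmem : x ∈ Nbr ε m x := Or.inl rfl
    have hymem : y ∈ Nbr ε m x := Or.inr (by rw [hsym]; exact h)
    refine ⟨Nbr ε m x, ?_, hxmem, hymem⟩
    rw [hI2]
    refine ⟨⟨x, rfl⟩, ?_⟩
    exact (Set.one_lt_ncard (Set.toFinite _)).mpr ⟨x, hxmem, y, hymem, hxy⟩
  -- every edge label is a subset of {m}
  have lab_sub : ∀ u v : t.V, t.T.Adj u v → lab s(u, v) ⊆ {m} := by
    intro u v huv
    by_cases hu : u ∈ Set.range t.leaf
    · obtain ⟨z, rfl⟩ := hu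
      by_cases hz : ∃ N ∈ I2, z ∈ N
      · rw [hout_empty z hz v huv]; exact Set.empty_subset _
      · rw [hout_m z hz v huv]
    · by_cases hv : v ∈ Set.range t.leaf
      · obtain ⟨z, rfl⟩ := hv
        rw [Sym2.eq_swap]
        by_cases hz : ∃ N ∈ I2, z ∈ N
        · rw [hout_empty z hz u huv.symm]; exact Set.empty_subset _
        · rw [hout_m z hz u huv.symm]
      · rw [hinner_m u v huv hu hv]
  -- if x,y are non-adjacent in G_m then every edge of the x-y path is labelled ∅
  have path_struct : ∀ (x y : X), x ≠ y → m ∉ ε x y →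
      ∀ p : t.T.Walk (t.leaf x) (t.leaf y), p.IsPath → ∀ e ∈ p.edges, lab e = ∅ := by
    intro x y hxy hne p hp
    obtain ⟨N, hN, hxN, hyN⟩ := hNbr_mem x y hxy hne
    have hlxy : t.leaf x ≠ t.leaf y := fun h => hxy (t.leaf_inj h)
    obtain ⟨w, h1, q, rfl⟩ := Walk.exists_eq_cons_of_ne hlxy p
    obtain rfl : w = vtx N := uniq x w (vtx N) h1 (hvtx_adj N hN x hxN)
    have hq : q.IsPath := hp.of_cons
    have hvy : t.leaf y ≠ vtx N := fun h => hvtx_inner N hN ⟨y, h⟩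
    obtain ⟨w2, h2, r, hr⟩ := Walk.exists_eq_cons_of_ne hvy q.reverse
    obtain rfl : w2 = vtx N := uniq y w2 (vtx N) h2 (hvtx_adj N hN y hyN)
    have hrp : r.IsPath := by
      have h' := hq.reverse
      rw [hr] at h'
      exact h'.of_cons
    have hrnil : r = Walk.nil := Walk.isPath_iff_eq_nil.mp hrp
    subst hrnil
    have hqe : q.edges = [s(t.leaf y, vtx N)] := by
      have h := congrArg Walk.edges hr
      rw [Walk.edges_reverse] at h
      simp only [Walk.edges_cons, Walk.edges_nil] at h
      rw [← List.reverse_reverse q.edges, h]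
      rfl
    intro e he
    rw [Walk.edges_cons, hqe] at he
    simp only [List.mem_cons, List.mem_singleton, List.not_mem_nil, or_false] at he
    rcases he with rfl | rfl
    · exact hout_empty x ⟨N, hN, hxN⟩ (vtx N) h1
    · exact hout_empty y ⟨N, hN, hyN⟩ (vtx N) h2
  -- main proof
  intro x y hxy p hp m'
  have hlxy : t.leaf x ≠ t.leaf y := fun h => hxy (t.leaf_inj h)
  rcases eq_or_ne m' m with rfl | hm
  · constructor
    · intro hmem
      by_cases hx : ∃ N ∈ I2, x ∈ N
      · by_cases hy : ∃ N ∈ I2, y ∈ N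
        · obtain ⟨N, hN, hxN⟩ := hx
          obtain ⟨N', hN', hyN'⟩ := hy
          have hNN' : N ≠ N' := by
            rintro rfl
            exact hcommon N hN x hxN y hyN' hxy hmem
          obtain ⟨w1, h1, q, rfl⟩ := Walk.exists_eq_cons_of_ne hlxy p
          obtain rfl : w1 = vtx N := uniq x w1 (vtx N) h1 (hvtx_adj N hN x hxN)
          have hvNy : vtx N ≠ t.leaf y := fun h => hvtx_inner N hN ⟨y, h.symm⟩
          obtain ⟨w2, h2, r, rfl⟩ := Walk.exists_eq_cons_of_ne hvNy q
          have hq2 : (Walk.cons h2 r).IsPath := hp.of_cons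
          have hw2y : w2 ≠ t.leaf y := by
            rintro rfl
            have heq := uniq y (vtx N) (vtx N') h2.symm (hvtx_adj N' hN' y hyN')
            exact hNN' (hvtx_inj hN hN' heq)
          have hw2 : w2 ∉ Set.range t.leaf := by
            rintro ⟨z, rfl⟩
            obtain ⟨w3, h3, s2, rfl⟩ := Walk.exists_eq_cons_of_ne hw2y r
            have hvw3 : vtx N = w3 := uniq z (vtx N) w3 h2.symm h3
            rw [Walk.cons_isPath_iff] at hq2
            apply hq2.2
            rw [Walk.support_cons]
            refine List.mem_cons_of_mem _ ?_
            rw [hvw3]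
            exact s2.start_mem_support
          refine ⟨s(vtx N, w2), ?_, ?_⟩
          · simp [Walk.edges_cons]
          · rw [hinner_m (vtx N) w2 h2 (hvtx_inner N hN) hw2]
            exact rfl
        · obtain ⟨w, h1, q, hq⟩ := Walk.exists_eq_cons_of_ne (Ne.symm hlxy) p.reverse
          refine ⟨s(t.leaf y, w), ?_, ?_⟩
          · have hmem' : s(t.leaf y, w) ∈ p.reverse.edges := by
              rw [hq, Walk.edges_cons]; exact List.mem_cons_self
            rwa [Walk.edges_reverse, List.mem_reverse] at hmem'
          · rw [hout_m y hy w h1]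
            exact rfl
      · obtain ⟨w, h1, q, rfl⟩ := Walk.exists_eq_cons_of_ne hlxy p
        refine ⟨s(t.leaf x, w), ?_, ?_⟩
        · rw [Walk.edges_cons]; exact List.mem_cons_self
        · rw [hout_m x hx w h1]
          exact rfl
    · rintro ⟨e, he, hme⟩
      by_contra hne
      rw [path_struct x y hxy hne p hp e he] at hme
      exact hme
  · constructor
    · intro h
      exact absurd (hmono x y h) hm
    · rintro ⟨e, he, hme⟩
      exfalso
      revert he hme
      refine Sym2.inductionOn e ?_
      intro u v he hme
      exact hm (lab_sub u v (p.adj_of_mem_edges he) hme)
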